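/- Fix μ ∈ ℝ, c > μ, σ > 0. The function h(ε) = (1−ε)²·φ((c−μ)/((1−ε)σ))·σ − (1−ε)·[1 − Φ((c−μ)/((1−ε)σ))]·(c−μ), defined for ε ∈ (−1, 1), is strictly decreasing in ε. -/

import Mathlib

open MeasureTheory Real Set ProbabilityTheory
open Filter

noncomputable def phi (t : ℝ) : ℝ := Real.exp (-t^2/2) / Real.sqrt (2*Real.pi)
noncomputable def Phi (t : ℝ) : ℝ := ∫ u in Set.Iic t, phi u

lemma phi_eq (t : ℝ) : phi t = Real.exp (-(1/2) * t^2) / Real.sqrt (2*Real.pi) := by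
  unfold phi; ring_nf

lemma phi_pos (t : ℝ) : 0 < phi t := by
  unfold phi
  positivity

lemma continuous_phi : Continuous phi := by
  unfold phi
  fun_prop

lemma integrable_phi : Integrable phi := by
  have h := (integrable_exp_neg_mul_sq (show (0:ℝ) < 1/2 by norm_num)).div_const
    (Real.sqrt (2*Real.pi))
  exact h.congr (by filter_upwards with x; rw [phi_eq])

lemma integral_phi : ∫ u, phi u = 1 := by
  have h : ∫ u : ℝ, Real.exp (-(1/2) * u^2) = Real.sqrt (Real.pi / (1/2)) :=
    integral_gaussian (1/2)
  have h2 : (∫ u, phi u) = (∫ u : ℝ, Real.exp (-(1/2) * u^2)) / Real.sqrt (2*Real.pi) := by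
    rw [← integral_div]
    exact integral_congr_ae (by filter_upwards with x; rw [phi_eq])
  rw [h2, h]
  rw [show Real.pi / (1/2) = 2 * Real.pi by ring]
  rw [div_self (by positivity)]

lemma hasDerivAt_phi (x : ℝ) : HasDerivAt phi (-x * phi x) x := by
  have h1 : HasDerivAt (fun t : ℝ => -t^2/2) (-x) x := by
    have := ((hasDerivAt_pow 2 x).neg).div_const 2
    refine this.congr_deriv ?_
    simp; ring
  have h2 := (h1.exp).div_const (Real.sqrt (2*Real.pi))
  refine h2.congr_deriv ?_
  unfold phi; ring

lemma hasDerivAt_Phi (x : ℝ) : HasDerivAt Phi (phi x) x := by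
  have key : ∀ t : ℝ, Phi t = (∫ u in (0:ℝ)..t, phi u) + Phi 0 := by
    intro t
    have := intervalIntegral.integral_Iic_sub_Iic (μ := volume)
      (integrable_phi.integrableOn) (integrable_phi.integrableOn) (a := 0) (b := t)
    unfold Phi; linarith
  have h : HasDerivAt (fun t => (∫ u in (0:ℝ)..t, phi u) + Phi 0) (phi x) x := by
    have := intervalIntegral.integral_hasDerivAt_right (a := 0) (b := x)
      (integrable_phi.intervalIntegrable)
      (continuous_phi.stronglyMeasurable.stronglyMeasurableAtFilter)
      continuous_phi.continuousAt
    simpa using this.add_const (Phi 0)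
  exact h.congr_of_eventuallyEq (by filter_upwards with t; rw [key t])

lemma one_sub_Phi (t : ℝ) : 1 - Phi t = ∫ u in Set.Ioi t, phi u := by
  have := intervalIntegral.integral_Iic_add_Ioi (μ := volume) (b := t)
    (integrable_phi.integrableOn) (integrable_phi.integrableOn)
  unfold Phi
  rw [integral_phi] at this
  linarith

lemma phi_tendsto_zero : Tendsto phi atTop (nhds 0) := by
  have h1 : Tendsto (fun t : ℝ => -t^2/2) atTop atBot := by
    apply Tendsto.atBot_div_const (by norm_num)
    exact tendsto_neg_atBot_iff.mpr (tendsto_pow_atTop (by norm_num))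
  have h2 : Tendsto (fun t : ℝ => Real.exp (-t^2/2)) atTop (nhds 0) :=
    Real.tendsto_exp_atBot.comp h1
  have h3 := h2.div_const (Real.sqrt (2*Real.pi))
  rw [zero_div] at h3
  exact h3

lemma integral_mul_phi (t : ℝ) : ∫ u in Set.Ioi t, u * phi u = phi t := by
  have hderiv : ∀ x ∈ Set.Ici t, HasDerivAt (fun u => -phi u) (x * phi x) x := by
    intro x _
    have := (hasDerivAt_phi x).neg; exact this.congr_deriv (by ring)
  have hint : IntegrableOn (fun u => u * phi u) (Set.Ioi t) := by
    have h := ((integrable_mul_exp_neg_mul_sq (show (0:ℝ) < 1/2 by norm_num)).div_const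
      (Real.sqrt (2*Real.pi)))
    refine (h.congr ?_).integrableOn
    filter_upwards with x
    rw [phi_eq]; ring
  have htend : Tendsto (fun u => -phi u) atTop (nhds 0) := by
    simpa using phi_tendsto_zero.neg
  have := integral_Ioi_of_hasDerivAt_of_tendsto' hderiv hint htend
  simpa using this

lemma mills (t : ℝ) (_ht : 0 < t) : t * (1 - Phi t) ≤ phi t := by
  rw [one_sub_Phi, ← integral_mul_phi t, ← smul_eq_mul, ← integral_smul]
  simp only [smul_eq_mul]
  apply setIntegral_mono_on
  · exact (integrable_phi.const_mul t).integrableOn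
  · have h := ((integrable_mul_exp_neg_mul_sq (show (0:ℝ) < 1/2 by norm_num)).div_const
      (Real.sqrt (2*Real.pi)))
    refine (h.congr ?_).integrableOn
    filter_upwards with x
    rw [phi_eq]; ring
  · exact measurableSet_Ioi
  · intro u hu
    have : t ≤ u := le_of_lt hu
    nlinarith [phi_pos u]

theorem stmt8 (μ c σ : ℝ) (hc : μ < c) (hσ : 0 < σ) :
    StrictAntiOn (fun ε : ℝ =>
        (1-ε)^2 * phi ((c-μ)/((1-ε)*σ)) * σ
          - (1-ε) * (1 - Phi ((c-μ)/((1-ε)*σ))) * (c-μ))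
      (Set.Ioo (-1) 1) := by
  have ha : 0 < c - μ := by linarith
  set a := c - μ with ha_def
  have key : ∀ x ∈ Set.Ioo (-1:ℝ) 1,
      HasDerivAt (fun ε : ℝ =>
        (1-ε)^2 * phi (a/((1-ε)*σ)) * σ - (1-ε) * (1 - Phi (a/((1-ε)*σ))) * a)
        (-2*(1-x)*σ*phi (a/((1-x)*σ)) + a*(1 - Phi (a/((1-x)*σ)))) x := by
    intro x hx
    have hs : 0 < 1 - x := by linarith [hx.2]
    have hsσ : (1-x)*σ ≠ 0 := by positivity
    set T := a/((1-x)*σ) with hT_def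
    set T' := a*σ/((1-x)*σ)^2 with hT'_def
    have hT : HasDerivAt (fun ε : ℝ => a/((1-ε)*σ)) T' x := by
      have hg : HasDerivAt (fun ε : ℝ => (1-ε)*σ) (-σ) x := by
        simpa using ((hasDerivAt_id x).const_sub 1).mul_const σ
      have := (hasDerivAt_const x a).div hg hsσ
      refine this.congr_deriv ?_
      rw [hT'_def]
      field_simp
      ring
    have hphiT : HasDerivAt (fun ε : ℝ => phi (a/((1-ε)*σ))) (-T * phi T * T') x := by
      have := (hasDerivAt_phi T).comp x hT
      exact this
    have hPhiT : HasDerivAt (fun ε : ℝ => 1 - Phi (a/((1-ε)*σ))) (-(phi T * T')) x :=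
      by have := ((hasDerivAt_Phi T).comp x hT).const_sub 1; exact this
    have hsq : HasDerivAt (fun ε : ℝ => (1-ε)^2) (-2*(1-x)) x := by
      have := ((hasDerivAt_id x).const_sub 1).pow 2
      refine this.congr_deriv ?_
      simp [id_eq]
    have hone : HasDerivAt (fun ε : ℝ => 1 - ε) (-1 : ℝ) x :=
      (hasDerivAt_id x).const_sub 1
    have hmain := ((hsq.mul hphiT).mul_const σ).sub ((hone.mul hPhiT).mul_const a)
    refine hmain.congr_deriv ?_
    rw [hT'_def, hT_def]
    field_simp
    ring
  apply strictAntiOn_of_deriv_neg (convex_Ioo _ _)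
  · intro x hx
    exact (key x hx).differentiableAt.continuousAt.continuousWithinAt
  · intro x hx
    rw [interior_Ioo] at hx
    rw [(key x hx).deriv]
    have hs : 0 < 1 - x := by linarith [hx.2]
    set T := a/((1-x)*σ) with hT_def
    have hT : 0 < T := by positivity
    have haT : a = (1-x)*σ*T := by
      rw [hT_def]; field_simp
    have hm := mills T hT
    have hp := phi_pos T
    have key2 : (1-x)*σ*(T*(1 - Phi T)) ≤ (1-x)*σ*phi T :=
      mul_le_mul_of_nonneg_left hm (le_of_lt (mul_pos hs hσ))
    nlinarith [mul_pos (mul_pos hs hσ) hp]
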